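/- Let X = (x_1 < … < x_n) and Y = (y_1 < … < y_n) be distinct strictly increasing n-tuples of real numbers with Y majorized by X. Then Y can be obtained from X by a finite sequence of simple nondegenerate contractions: there exist strictly increasing n-tuples X_1 = X, X_2, …, X_m = Y such that each X_{i+1} is obtained from X_i by replacing some pair of consecutive entries u < v by u + t, v − t with t ∈ (0, (v−u)/2). -/

import Mathlib

open Finset

/-- Classical majorization: `x` is majorized by `y` (as `n`-tuples) iff
every convex function sums no larger on `x` than on `y`. -/
def MajorizedOn (n : ℕ) (x y : ℕ → ℝ) : Prop :=
  ∀ f : ℝ → ℝ, ConvexOn ℝ Set.univ f →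
    ∑ i ∈ Finset.range n, f (x i) ≤ ∑ i ∈ Finset.range n, f (y i)

/-- `y` is obtained from `x` (an `n`-tuple) by a simple nondegenerate contraction. -/
def SimpleNondegContraction (n : ℕ) (x y : ℕ → ℝ) : Prop :=
  ∃ k t : _, k + 1 < n ∧ (0 : ℝ) < t ∧ t < (x (k + 1) - x k) / 2 ∧
    y k = x k + t ∧ y (k + 1) = x (k + 1) - t ∧
    ∀ i < n, i ≠ k → i ≠ k + 1 → y i = x i

namespace MajChain

def Inc (n : ℕ) (x : ℕ → ℝ) : Prop := ∀ i, i + 1 < n → x i < x (i + 1)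

def IsChain (n : ℕ) (x y : ℕ → ℝ) : Prop :=
  ∃ (m : ℕ) (c : ℕ → ℕ → ℝ), c 0 = x ∧ (∀ i < n, c m i = y i) ∧
    (∀ j ≤ m, ∀ i, i + 1 < n → c j i < c j (i + 1)) ∧
    ∀ j < m, SimpleNondegContraction n (c j) (c (j + 1))

lemma snc_congr {n : ℕ} {a a' b b' : ℕ → ℝ} (ha : ∀ i < n, a i = a' i)
    (hb : ∀ i < n, b i = b' i) (h : SimpleNondegContraction n a b) :
    SimpleNondegContraction n a' b' := by
  obtain ⟨k, t, hk, ht0, ht, h1, h2, h3⟩ := h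
  refine ⟨k, t, hk, ht0, ?_, ?_, ?_, ?_⟩
  · rw [← ha k (by omega), ← ha (k+1) hk]; exact ht
  · rw [← hb k (by omega), ← ha k (by omega)]; exact h1
  · rw [← hb (k+1) hk, ← ha (k+1) hk]; exact h2
  · intro i hi h4 h5
    rw [← hb i hi, ← ha i hi]; exact h3 i hi h4 h5

lemma chain_refl {n : ℕ} {x y : ℕ → ℝ} (h : ∀ i < n, x i = y i) (hinc : Inc n x) :
    IsChain n x y := by
  refine ⟨0, fun _ => x, rfl, h, ?_, by omega⟩
  intro j _ i hi; exact hinc i hi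

lemma chain_single {n : ℕ} {x y : ℕ → ℝ} (hx : Inc n x) (hy : Inc n y)
    (h : SimpleNondegContraction n x y) : IsChain n x y := by
  refine ⟨1, fun s => if s = 0 then x else y, by simp, by simp, ?_, ?_⟩
  · intro j _ i hi
    by_cases hj : j = 0 <;> simp [hj] <;> [exact hx i hi; exact hy i hi]
  · intro j hj
    interval_cases j
    simpa using h

lemma chain_trans {n : ℕ} {x y z : ℕ → ℝ} (h1 : IsChain n x y) (h2 : IsChain n y z) :
    IsChain n x z := by
  obtain ⟨m1, c1, hc10, hc1m, hc1inc, hc1s⟩ := h1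
  obtain ⟨m2, c2, hc20, hc2m, hc2inc, hc2s⟩ := h2
  refine ⟨m1 + m2, fun j => if j ≤ m1 then c1 j else c2 (j - m1), ?_, ?_, ?_, ?_⟩
  · simp [hc10]
  · intro i hi
    by_cases hm2 : m2 = 0
    · subst hm2
      simp only [Nat.add_zero, le_refl, if_pos]
      rw [hc1m i hi, ← hc2m i hi, hc20]
    · have : ¬ (m1 + m2 ≤ m1) := by omega
      simp only [this, if_neg, Nat.add_sub_cancel_left]
      exact hc2m i hi
  · intro j hj i hi
    by_cases h : j ≤ m1
    · simp only [h, if_pos]; exact hc1inc j h i hi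
    · simp only [h, if_neg]; exact hc2inc (j - m1) (by omega) i hi
  · intro j hj
    rcases lt_trichotomy j m1 with h | h | h
    · have h1 : j ≤ m1 := by omega
      have h2 : j + 1 ≤ m1 := by omega
      simp only [h1, h2, if_pos]
      exact hc1s j h
    · subst h
      have hm2 : 0 < m2 := by omega
      have h2 : ¬ (j + 1 ≤ j) := by omega
      simp only [le_refl, if_pos, h2, if_neg, Nat.add_sub_cancel_left]
      refine snc_congr (n := n) (a := c2 0) (b := c2 1) ?_ (fun i _ => rfl) (hc2s 0 hm2)
      intro i hi; rw [hc20, ← hc1m i hi]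
    · have h1 : ¬ (j ≤ m1) := by omega
      have h2 : ¬ (j + 1 ≤ m1) := by omega
      simp only [h1, h2, if_neg]
      have : j + 1 - m1 = (j - m1) + 1 := by omega
      rw [this]
      exact hc2s (j - m1) (by omega)


noncomputable def casc (x : ℕ → ℝ) (j r : ℕ) (t : ℝ) : ℕ → ℝ :=
  fun i => if i = j then x j + t else if i = j + r then x (j + r) - t else x i

lemma casc_j {x : ℕ → ℝ} {j r : ℕ} {t : ℝ} : casc x j r t j = x j + t := by simp [casc]

lemma casc_jr {x : ℕ → ℝ} {j r : ℕ} {t : ℝ} (hr : 1 ≤ r) :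
    casc x j r t (j + r) = x (j + r) - t := by
  have : ¬ (j + r = j) := by omega
  simp [casc, this, show r ≠ 0 by omega]

lemma casc_other {x : ℕ → ℝ} {j r : ℕ} {t : ℝ} {i : ℕ} (h1 : i ≠ j) (h2 : i ≠ j + r) :
    casc x j r t i = x i := by simp [casc, h1, h2]

lemma inc_casc {n : ℕ} {x : ℕ → ℝ} {j r : ℕ} {t : ℝ} (hr : 1 ≤ r) (hjr : j + r < n)
    (hinc : Inc n x) (ht0 : 0 < t) (htj : 2*t < x (j+1) - x j)
    (hgap : ∀ i, j < i → i < j + r → t < x (i+1) - x i) :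
    Inc n (casc x j r t) := by
  intro i hi
  rcases eq_or_ne i j with rfl | hij
  · rw [casc_j]
    rcases eq_or_ne (i+1) (i+r) with h1 | h1
    · have hr1 : r = 1 := by omega
      rw [h1, casc_jr hr]
      have he : i + r = i + 1 := by omega
      rw [he]; linarith
    · rw [casc_other (by omega) h1]
      have := hinc i (by omega)
      linarith
  · rcases eq_or_ne (i+1) j with h2 | h2
    · rw [casc_other hij (by omega), h2, casc_j]
      have := hinc i hi
      rw [h2] at this
      linarith
    · rcases eq_or_ne i (j+r) with h3 | h3
      · rw [h3, casc_jr hr, casc_other (by omega) (by omega)]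
        have := hinc (j+r) (by omega)
        linarith
      · rw [casc_other hij h3]
        rcases eq_or_ne (i+1) (j+r) with h4 | h4
        · have h5 : j < i := by omega
          have h6 := hgap i h5 (by omega)
          rw [h4, casc_jr hr, ← h4]
          linarith
        · rw [casc_other h2 h4]
          exact hinc i hi

lemma chain_casc {n : ℕ} : ∀ (r : ℕ) (x : ℕ → ℝ) (j : ℕ) (t : ℝ), 1 ≤ r → j + r < n →
    Inc n x → 0 < t → 2*t < x (j+1) - x j →
    (∀ i, j < i → i < j + r → t < x (i+1) - x i) →
    IsChain n x (casc x j r t) := by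
  intro r
  induction r with
  | zero => omega
  | succ r IH =>
    intro x j t _ hjr hinc ht0 htj hgap
    rcases Nat.eq_zero_or_pos r with rfl | hr
    · -- single pinch at (j, j+1)
      refine chain_single hinc (inc_casc le_rfl hjr hinc ht0 htj hgap) ?_
      refine ⟨j, t, hjr, ht0, by linarith, casc_j, casc_jr le_rfl, ?_⟩
      intro i _ h1 h2
      exact casc_other h1 h2
    · have hy : IsChain n x (casc x j r t) :=
        IH x j t hr (by omega) hinc ht0 htj (fun i h1 h2 => hgap i h1 (by omega))
      set y := casc x j r t with hydef
      have hyinc : Inc n y :=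
        inc_casc hr (by omega) hinc ht0 htj (fun i h1 h2 => hgap i h1 (by omega))
      have hwinc : Inc n (casc x j (r+1) t) :=
        inc_casc (by omega) hjr hinc ht0 htj hgap
      refine chain_trans hy (chain_single hyinc hwinc ?_)
      have hgr : t < x (j+r+1) - x (j+r) := hgap (j+r) (by omega) (by omega)
      refine ⟨j + r, t, by omega, ht0, ?_, ?_, ?_, ?_⟩
      · have e1 : y (j+r+1) = x (j+r+1) := casc_other (by omega) (by omega)
        have e2 : y (j+r) = x (j+r) - t := casc_jr hr
        rw [e1, e2]; linarith
      · have e1 : casc x j (r+1) t (j+r) = x (j+r) := casc_other (by omega) (by omega)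
        have e2 : y (j+r) = x (j+r) - t := casc_jr hr
        rw [e1, e2]; ring
      · have e1 : casc x j (r+1) t (j+r+1) = x (j+r+1) - t := by
          have : j + r + 1 = j + (r+1) := by omega
          rw [this, casc_jr (by omega)]
        have e2 : y (j+r+1) = x (j+r+1) := casc_other (by omega) (by omega)
        rw [e1, e2]
      · intro i _ h1 h2
        rcases eq_or_ne i j with rfl | hij
        · rw [casc_j, hydef, casc_j]
        · have e1 : casc x j (r+1) t i = x i := casc_other hij (by omega)
          have e2 : y i = x i := casc_other hij (by omega)
          rw [e1, e2]

def pre (Y x : ℕ → ℝ) (K : ℕ) : ℝ := ∑ i ∈ Finset.range (K+1), (Y i - x i)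

structure Inv (n : ℕ) (Y x : ℕ → ℝ) : Prop where
  inc : Inc n x
  pre_nonneg : ∀ K, K + 1 < n → 0 ≤ pre Y x K
  total : ∑ i ∈ Finset.range n, x i = ∑ i ∈ Finset.range n, Y i

lemma pre_last {n : ℕ} {Y x : ℕ → ℝ} (h : Inv n Y x) (hn : 0 < n) :
    pre Y x (n-1) = 0 := by
  unfold pre
  have : n - 1 + 1 = n := by omega
  rw [this, Finset.sum_sub_distrib, h.total, sub_self]

lemma pre_nonneg' {n : ℕ} {Y x : ℕ → ℝ} (h : Inv n Y x) {K : ℕ} (hK : K < n) :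
    0 ≤ pre Y x K := by
  rcases Nat.lt_or_ge (K+1) n with h1 | h1
  · exact h.pre_nonneg K h1
  · have : K = n - 1 := by omega
    rw [this, pre_last h (by omega)]

lemma sum_casc {n : ℕ} {x : ℕ → ℝ} {j r : ℕ} {t : ℝ} (hr : 1 ≤ r) (hjr : j + r < n) :
    ∑ i ∈ Finset.range n, casc x j r t i = ∑ i ∈ Finset.range n, x i := by
  have hpt : ∀ i, casc x j r t i =
      x i + ((if i = j then t else 0) + (if i = j + r then -t else 0)) := by
    intro i
    rcases eq_or_ne i j with rfl | h1
    · rw [casc_j]; simp; omega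
    · rcases eq_or_ne i (j+r) with rfl | h2
      · rw [casc_jr hr]; simp [h1, show r ≠ 0 by omega]; ring
      · rw [casc_other h1 h2]; simp [h1, h2]
  rw [Finset.sum_congr rfl (fun i _ => hpt i), Finset.sum_add_distrib,
    Finset.sum_add_distrib, Finset.sum_ite_eq' (Finset.range n) j (fun _ => t),
    Finset.sum_ite_eq' (Finset.range n) (j+r) (fun _ => -t)]
  have h1 : j ∈ Finset.range n := Finset.mem_range.2 (by omega)
  have h2 : j + r ∈ Finset.range n := Finset.mem_range.2 hjr
  rw [if_pos h1, if_pos h2]; ring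

lemma pre_casc {Y x : ℕ → ℝ} {j r : ℕ} {t : ℝ} (hr : 1 ≤ r) (K : ℕ) :
    pre Y (casc x j r t) K = pre Y x K - (if j ≤ K ∧ K < j + r then t else 0) := by
  unfold pre
  have hpt : ∀ i, Y i - casc x j r t i =
      (Y i - x i) + ((if i = j then -t else 0) + (if i = j + r then t else 0)) := by
    intro i
    rcases eq_or_ne i j with rfl | h1
    · rw [casc_j, if_pos rfl, if_neg (by omega)]; ring
    · rcases eq_or_ne i (j+r) with rfl | h2
      · rw [casc_jr hr]; simp [h1, show r ≠ 0 by omega]; ring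
      · rw [casc_other h1 h2]; simp [h1, h2]
  rw [Finset.sum_congr rfl (fun i _ => hpt i), Finset.sum_add_distrib,
    Finset.sum_add_distrib, Finset.sum_ite_eq' (Finset.range (K+1)) j (fun _ => -t),
    Finset.sum_ite_eq' (Finset.range (K+1)) (j+r) (fun _ => t)]
  simp only [Finset.mem_range]
  split_ifs <;> first | (exfalso; omega) | ring

noncomputable def cnt (n : ℕ) (Y x : ℕ → ℝ) : ℕ := ((Finset.range n).filter (fun i => x i ≠ Y i)).card

lemma pre_eq_of_between {n : ℕ} {Y x : ℕ → ℝ} {j K : ℕ} (hjK : j ≤ K)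
    (hbet : ∀ i, j < i → i ≤ K → x i = Y i) :
    pre Y x K = pre Y x j := by
  unfold pre
  rw [Finset.range_eq_Ico,
    ← Finset.sum_Ico_consecutive _ (Nat.zero_le (j+1)) (by omega : j + 1 ≤ K + 1)]
  have : ∑ i ∈ Finset.Ico (j+1) (K+1), (Y i - x i) = 0 := by
    apply Finset.sum_eq_zero
    intro i hi
    rw [Finset.mem_Ico] at hi
    rw [hbet i (by omega) (by omega)]; ring
  rw [this, add_zero]
  rw [Finset.range_eq_Ico]

lemma pre_ge_gap {n : ℕ} {Y x : ℕ → ℝ} (h : Inv n Y x) {j : ℕ} (hj : j < n) :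
    Y j - x j ≤ pre Y x j := by
  rcases Nat.eq_zero_or_pos j with rfl | hj0
  · unfold pre; rw [Finset.sum_range_one]
  · have : pre Y x j = pre Y x (j-1) + (Y j - x j) := by
      have h1 : j - 1 + 1 = j := by omega
      have h2 : j + 1 = (j - 1 + 1) + 1 := by omega
      unfold pre
      rw [h2, Finset.sum_range_succ, h1]
    rw [this]
    have := pre_nonneg' h (show j - 1 < n by omega)
    linarith

lemma exists_pair {n : ℕ} {Y x : ℕ → ℝ} (h : Inv n Y x)
    (hne : ∃ i, i < n ∧ x i ≠ Y i) :
    ∃ j k, j < k ∧ k < n ∧ x j < Y j ∧ Y k < x k ∧ ∀ i, j < i → i < k → x i = Y i := by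
  obtain ⟨i0, hi0n, hi0⟩ := hne
  -- surplus set nonempty
  have hT : ∃ i ∈ (Finset.range n).filter (fun i => Y i < x i), True := by
    by_contra hc
    push_neg at hc
    have hle : ∀ i ∈ Finset.range n, x i ≤ Y i := by
      intro i hi
      by_contra hx
      exact (hc i (Finset.mem_filter.2 ⟨hi, by push_neg at hx; linarith⟩))
    have hlt : ∑ i ∈ Finset.range n, x i < ∑ i ∈ Finset.range n, Y i := by
      apply Finset.sum_lt_sum hle
      refine ⟨i0, Finset.mem_range.2 hi0n, ?_⟩
      have := hle i0 (Finset.mem_range.2 hi0n)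
      exact lt_of_le_of_ne this hi0
    rw [h.total] at hlt; exact lt_irrefl _ hlt
  set T := (Finset.range n).filter (fun i => Y i < x i) with hTdef
  have hTne : T.Nonempty := by obtain ⟨i, hi, -⟩ := hT; exact ⟨i, hi⟩
  set k := T.min' hTne with hkdef
  have hkT : k ∈ T := T.min'_mem hTne
  have hkn : k < n := Finset.mem_range.1 (Finset.mem_filter.1 hkT).1
  have hks : Y k < x k := (Finset.mem_filter.1 hkT).2
  have hbelow : ∀ i, i < k → x i ≤ Y i := by
    intro i hik
    by_contra hx
    push_neg at hx
    have : i ∈ T := Finset.mem_filter.2 ⟨Finset.mem_range.2 (by omega), hx⟩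
    have := T.min'_le i this
    omega
  -- deficient below k exists
  have hD : ∃ j, j < k ∧ x j < Y j := by
    by_contra hc
    push_neg at hc
    have heq : ∀ i, i < k → x i = Y i := by
      intro i hik
      exact le_antisymm (hbelow i hik) (hc i hik)
    have hpk : pre Y x k = Y k - x k := by
      unfold pre
      rw [Finset.sum_range_succ]
      have : ∑ i ∈ Finset.range k, (Y i - x i) = 0 := by
        apply Finset.sum_eq_zero
        intro i hi
        rw [heq i (Finset.mem_range.1 hi)]; ring
      rw [this, zero_add]
    have := pre_nonneg' h hkn
    rw [hpk] at this
    linarith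
  set D := (Finset.range k).filter (fun i => x i < Y i) with hDdef
  have hDne : D.Nonempty := by
    obtain ⟨j, hj1, hj2⟩ := hD
    exact ⟨j, Finset.mem_filter.2 ⟨Finset.mem_range.2 hj1, hj2⟩⟩
  set j := D.max' hDne with hjdef
  have hjD : j ∈ D := D.max'_mem hDne
  have hjk : j < k := Finset.mem_range.1 (Finset.mem_filter.1 hjD).1
  have hjd : x j < Y j := (Finset.mem_filter.1 hjD).2
  refine ⟨j, k, hjk, hkn, hjd, hks, ?_⟩
  intro i h1 h2
  have hle := hbelow i h2
  rcases eq_or_lt_of_le hle with he | hlt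
  · exact he
  · exfalso
    have : i ∈ D := Finset.mem_filter.2 ⟨Finset.mem_range.2 h2, hlt⟩
    have := D.le_max' i this
    omega

lemma inner {n : ℕ} {Y : ℕ → ℝ} (hY : Inc n Y) {γ : ℝ} (hγ0 : 0 < γ)
    (hγ : ∀ i, i + 1 < n → γ ≤ Y (i+1) - Y i) {j k : ℕ} (hjk : j < k) (hkn : k < n)
    {N : ℕ} (IH : ∀ x, Inv n Y x → cnt n Y x ≤ N → IsChain n x Y) :
    ∀ (M : ℕ) (x : ℕ → ℝ), Inv n Y x → cnt n Y x ≤ N + 1 → x j < Y j → Y k < x k →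
      (∀ i, j < i → i < k → x i = Y i) → Y j - x j ≤ (M : ℝ) * (γ/2) → IsChain n x Y := by
  intro M
  induction M with
  | zero =>
    intro x _ _ hj _ _ hδ
    simp at hδ
    linarith
  | succ M IHM =>
    intro x hx hcnt hj hk hbet hδ
    set δj := Y j - x j with hδjdef
    set δk := x k - Y k with hδkdef
    set t := min (min δj δk) (γ/2) with htdef
    have hδj0 : 0 < δj := by simp [hδjdef]; linarith
    have hδk0 : 0 < δk := by simp [hδkdef]; linarith
    have ht0 : 0 < t := lt_min (lt_min hδj0 hδk0) (by linarith)
    have htδj : t ≤ δj := le_trans (min_le_left _ _) (min_le_left _ _)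
    have htδk : t ≤ δk := le_trans (min_le_left _ _) (min_le_right _ _)
    have htγ : t ≤ γ/2 := min_le_right _ _
    have hj1n : j + 1 < n := by omega
    have hxj1 : Y (j+1) ≤ x (j+1) := by
      rcases eq_or_ne k (j+1) with he | he
      · rw [← he]
        have := hY j (by omega)
        rw [← he] at this
        linarith
      · rw [hbet (j+1) (by omega) (by omega)]
    have h2t : 2*t < x (j+1) - x j := by
      have hg := hγ j hj1n
      have h1 : t + t ≤ δj + γ/2 := add_le_add htδj htγ
      simp only [hδjdef] at h1
      linarith
    have hgap : ∀ i, j < i → i < k → t < x (i+1) - x i := by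
      intro i h1 h2
      rcases eq_or_ne (i+1) k with h4 | h4
      · have hxi : x i = Y i := hbet i h1 (by omega)
        have hYik : Y i < Y k := by
          have := hY i (by omega)
          rwa [h4] at this
        rw [h4, hxi]
        have : t ≤ x k - Y k := htδk
        linarith
      · have hxi : x i = Y i := hbet i h1 (by omega)
        have hxi1 : x (i+1) = Y (i+1) := hbet (i+1) (by omega) (by omega)
        have := hγ i (by omega)
        rw [hxi, hxi1]
        linarith
    have hchain1 : IsChain n x (casc x j (k-j) t) :=
      chain_casc (k-j) x j t (by omega) (by omega) hx.inc ht0 h2t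
        (fun i h1 h2 => hgap i h1 (by omega))
    set x' := casc x j (k-j) t with hx'def
    have hjr : j + (k - j) = k := by omega
    have hx'j : x' j = x j + t := casc_j
    have hx'k : x' k = x k - t := by
      have := casc_jr (x := x) (j := j) (r := k-j) (t := t) (by omega)
      rwa [hjr] at this
    have hx'o : ∀ i, i ≠ j → i ≠ k → x' i = x i := by
      intro i h1 h2
      exact casc_other h1 (by omega)
    have hinc' : Inc n x' :=
      inc_casc (by omega) (by omega) hx.inc ht0 h2t (fun i h1 h2 => hgap i h1 (by omega))
    have hinv' : Inv n Y x' := by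
      refine ⟨hinc', ?_, ?_⟩
      · intro K hK
        rw [hx'def, pre_casc (by omega)]
        split_ifs with hcond
        · have hpK : pre Y x K = pre Y x j :=
            pre_eq_of_between (n := n) hcond.1 (fun i hi1 hi2 => hbet i hi1 (by omega))
          have hgj := pre_ge_gap hx (show j < n by omega)
          rw [hpK]
          simp only [← hδjdef] at hgj ⊢
          linarith
        · have := pre_nonneg' hx (show K < n by omega)
          linarith
      · rw [hx'def, sum_casc (by omega) (by omega), hx.total]
    have hsub : (Finset.range n).filter (fun i => x' i ≠ Y i) ⊆
        (Finset.range n).filter (fun i => x i ≠ Y i) := by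
      intro i hi
      obtain ⟨hin, hne'⟩ := Finset.mem_filter.1 hi
      refine Finset.mem_filter.2 ⟨hin, ?_⟩
      rcases eq_or_ne i j with rfl | h1
      · exact ne_of_lt hj
      · rcases eq_or_ne i k with rfl | h2
        · exact ne_of_gt hk
        · rwa [hx'o i h1 h2] at hne'
    by_cases hfin : min δj δk ≤ γ/2
    · have htval : t = min δj δk := min_eq_left hfin
      have hdrop : ∃ i0, i0 ∈ (Finset.range n).filter (fun i => x i ≠ Y i) ∧
          i0 ∉ (Finset.range n).filter (fun i => x' i ≠ Y i) := by
        rcases le_total δj δk with hc | hc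
        · refine ⟨j, Finset.mem_filter.2 ⟨Finset.mem_range.2 (by omega), ne_of_lt hj⟩, ?_⟩
          intro hmem
          have := (Finset.mem_filter.1 hmem).2
          apply this
          rw [hx'j, htval, min_eq_left hc, hδjdef]
          ring
        · refine ⟨k, Finset.mem_filter.2 ⟨Finset.mem_range.2 hkn, ne_of_gt hk⟩, ?_⟩
          intro hmem
          have := (Finset.mem_filter.1 hmem).2
          apply this
          rw [hx'k, htval, min_eq_right hc, hδkdef]
          ring
      obtain ⟨i0, hi0in, hi0out⟩ := hdrop
      have hlt : cnt n Y x' < cnt n Y x := by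
        apply Finset.card_lt_card
        exact (Finset.ssubset_iff_of_subset hsub).2 ⟨i0, hi0in, hi0out⟩
      exact chain_trans hchain1 (IH x' hinv' (by unfold cnt at *; omega))
    · push_neg at hfin
      have htval : t = γ/2 := min_eq_right (le_of_lt hfin)
      have hγδj : γ/2 < δj := lt_of_lt_of_le hfin (min_le_left _ _)
      have hγδk : γ/2 < δk := lt_of_lt_of_le hfin (min_le_right _ _)
      have hj' : x' j < Y j := by
        rw [hx'j, htval]
        simp only [hδjdef] at hγδj
        linarith
      have hk' : Y k < x' k := by
        rw [hx'k, htval]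
        simp only [hδkdef] at hγδk
        linarith
      have hbet' : ∀ i, j < i → i < k → x' i = Y i := by
        intro i h1 h2
        rw [hx'o i (by omega) (by omega)]
        exact hbet i h1 h2
      have hcnt' : cnt n Y x' ≤ N + 1 :=
        le_trans (Finset.card_le_card hsub) hcnt
      have hδ' : Y j - x' j ≤ M * (γ/2) := by
        rw [hx'j, htval]
        push_cast at hδ ⊢
        simp only [hδjdef] at hδ
        linarith
      exact chain_trans hchain1 (IHM x' hinv' hcnt' hj' hk' hbet' hδ')

lemma main {n : ℕ} {Y : ℕ → ℝ} (hY : Inc n Y) :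
    ∀ (N : ℕ) (x : ℕ → ℝ), Inv n Y x → cnt n Y x ≤ N → IsChain n x Y := by
  intro N
  induction N with
  | zero =>
    intro x hx hc
    have hemp : (Finset.range n).filter (fun i => x i ≠ Y i) = ∅ :=
      Finset.card_eq_zero.1 (le_antisymm hc (Nat.zero_le _))
    have heq : ∀ i < n, x i = Y i := by
      intro i hi
      by_contra hne
      have : i ∈ (Finset.range n).filter (fun i => x i ≠ Y i) :=
        Finset.mem_filter.2 ⟨Finset.mem_range.2 hi, hne⟩
      rw [hemp] at this
      exact absurd this (Finset.notMem_empty i)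
    exact chain_refl heq hx.inc
  | succ N IH =>
    intro x hx hc
    by_cases h0 : ∀ i < n, x i = Y i
    · exact chain_refl h0 hx.inc
    · push_neg at h0
      obtain ⟨i0, hi0, hne⟩ := h0
      obtain ⟨j, k, hjk, hkn, hj, hk, hbet⟩ := exists_pair hx ⟨i0, hi0, hne⟩
      have hn2 : 2 ≤ n := by omega
      obtain ⟨i₁, hi₁, hmin⟩ := Finset.exists_min_image (Finset.range (n-1))
        (fun i => Y (i+1) - Y i) ⟨0, Finset.mem_range.2 (by omega)⟩
      set γ := Y (i₁+1) - Y i₁ with hγdef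
      have hγ0 : 0 < γ := by
        have hi₁' := Finset.mem_range.1 hi₁
        have := hY i₁ (by omega)
        rw [hγdef]; linarith
      have hγ : ∀ i, i+1 < n → γ ≤ Y (i+1) - Y i := by
        intro i hi
        exact hmin i (Finset.mem_range.2 (by omega))
      obtain ⟨M, hM⟩ := exists_nat_ge ((Y j - x j) / (γ/2))
      have hδM : Y j - x j ≤ (M:ℝ) * (γ/2) := by
        rw [div_le_iff₀ (by linarith)] at hM
        linarith
      exact inner hY hγ0 hγ hjk hkn IH M x hx hc hj hk hbet hδM

lemma inv_of_maj {n : ℕ} {X Y : ℕ → ℝ} (hX : ∀ i, i + 1 < n → X i < X (i + 1))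
    (hmaj : MajorizedOn n Y X) : Inv n Y X := by
  have hXmono : ∀ q, q < n → ∀ p, p ≤ q → X p ≤ X q := by
    intro q
    induction q with
    | zero =>
      intro _ p hp
      have : p = 0 := by omega
      rw [this]
    | succ q ih =>
      intro hq p hp
      rcases Nat.eq_or_lt_of_le hp with he | hl
      · rw [he]
      · have h1 := ih (by omega) p (by omega)
        have h2 := hX q hq
        linarith
  have hid : ∑ i ∈ Finset.range n, Y i ≤ ∑ i ∈ Finset.range n, X i := by
    have := hmaj id (convexOn_id convex_univ)
    simpa using this
  have hneg : ∑ i ∈ Finset.range n, X i ≤ ∑ i ∈ Finset.range n, Y i := by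
    have hc : ConvexOn ℝ Set.univ (fun z : ℝ => -z) := by
      refine ⟨convex_univ, ?_⟩
      intro p _ q _ u v hu hv huv
      simp only [smul_eq_mul]
      apply le_of_eq
      ring
    have := hmaj (fun z : ℝ => -z) hc
    simp only [Finset.sum_neg_distrib] at this
    linarith
  have htotal : ∑ i ∈ Finset.range n, X i = ∑ i ∈ Finset.range n, Y i :=
    le_antisymm hneg hid
  refine ⟨hX, ?_, htotal⟩
  intro K hK
  set a := X (K+1) with hadef
  have hconv : ConvexOn ℝ Set.univ (fun z : ℝ => max (a - z) 0) := by
    refine ⟨convex_univ, ?_⟩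
    intro p _ q _ u v hu hv huv
    simp only [smul_eq_mul]
    have h1 : a - (u*p + v*q) = u*(a-p) + v*(a-q) := by
      have : u*(a-p) + v*(a-q) = (u+v)*a - (u*p + v*q) := by ring
      rw [this, huv, one_mul]
    apply max_le
    · rw [h1]
      apply add_le_add
      · exact mul_le_mul_of_nonneg_left (le_max_left _ _) hu
      · exact mul_le_mul_of_nonneg_left (le_max_left _ _) hv
    · have h2 : 0 ≤ u * max (a - p) 0 := mul_nonneg hu (le_max_right _ _)
      have h3 : 0 ≤ v * max (a - q) 0 := mul_nonneg hv (le_max_right _ _)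
      linarith
  have hsum := hmaj (fun z : ℝ => max (a - z) 0) hconv
  have e1 : ∑ i ∈ Finset.range (K+1), max (a - X i) 0 = ∑ i ∈ Finset.range n, max (a - X i) 0 := by
    apply Finset.sum_subset (Finset.range_subset_range.2 (by omega))
    intro i hin hiK
    have h1 : K + 1 ≤ i := by
      have h0 : ¬ i < K + 1 := fun h => hiK (Finset.mem_range.2 h)
      omega
    have h2 : a ≤ X i := hXmono i (Finset.mem_range.1 hin) (K+1) h1
    have : a - X i ≤ 0 := by linarith
    exact max_eq_right this
  have e2 : ∑ i ∈ Finset.range (K+1), max (a - X i) 0 = ∑ i ∈ Finset.range (K+1), (a - X i) := by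
    apply Finset.sum_congr rfl
    intro i hi
    have h1 : X i ≤ a := hXmono (K+1) hK i (by have := Finset.mem_range.1 hi; omega)
    exact max_eq_left (by linarith)
  have e3 : ∑ i ∈ Finset.range (K+1), (a - Y i) ≤ ∑ i ∈ Finset.range (K+1), max (a - Y i) 0 :=
    Finset.sum_le_sum (fun i _ => le_max_left _ _)
  have e4 : ∑ i ∈ Finset.range (K+1), max (a - Y i) 0 ≤ ∑ i ∈ Finset.range n, max (a - Y i) 0 :=
    Finset.sum_le_sum_of_subset_of_nonneg (Finset.range_subset_range.2 (by omega))
      (fun i _ _ => le_max_right _ _)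
  have e5 : ∑ i ∈ Finset.range (K+1), (a - Y i) ≤ ∑ i ∈ Finset.range (K+1), (a - X i) := by
    linarith
  unfold pre
  have e6 : ∑ i ∈ Finset.range (K+1), (Y i - X i) =
      ∑ i ∈ Finset.range (K+1), ((a - X i) - (a - Y i)) := by
    apply Finset.sum_congr rfl
    intro i _
    ring
  rw [e6, Finset.sum_sub_distrib]
  linarith

end MajChain


/-- Proposition: if `Y ≺ X` are distinct strictly increasing `n`-tuples, then `Y`
is obtained from `X` by finitely many simple nondegenerate contractions, all
intermediate tuples being strictly increasing. -/
theorem majorized_strict_chain_of_contractions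
    (n : ℕ) (X Y : ℕ → ℝ)
    (hX : ∀ i, i + 1 < n → X i < X (i + 1))
    (hY : ∀ i, i + 1 < n → Y i < Y (i + 1))
    (hne : ∃ i < n, X i ≠ Y i)
    (hmaj : MajorizedOn n Y X) :
    ∃ (m : ℕ) (c : ℕ → ℕ → ℝ), c 0 = X ∧ (∀ i < n, c m i = Y i) ∧
      (∀ j ≤ m, ∀ i, i + 1 < n → c j i < c j (i + 1)) ∧
      ∀ j < m, SimpleNondegContraction n (c j) (c (j + 1)) := by
  obtain ⟨m, c, h1, h2, h3, h4⟩ :=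
    MajChain.main hY (MajChain.cnt n Y X) X (MajChain.inv_of_maj hX hmaj) le_rfl
  exact ⟨m, c, h1, h2, h3, h4⟩
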